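/- arXiv:2406.15184 — 2 statements merged into one kernel-verified Lean document; each statement's English description precedes it below -/
import Mathlib

section
/- Every maximal clone on a finite set A with |A| ≥ 3 is of the form Pol(ρ) for some relation ρ on A of arity at most |A|. -/
universe u

/-- The type of finitary operations (of positive arity `n + 1`) on `A`. -/
abbrev Ops (A : Type u) : Type u := Σ n : ℕ, (Fin (n + 1) → A) → A

/-- A set of finitary operations on `A` is a clone if it contains all projection
operations and is closed under composition. -/
def IsClone {A : Type u} (C : Set (Ops A)) : Prop :=
  (∀ (n : ℕ) (i : Fin (n + 1)), (⟨n, fun x => x i⟩ : Ops A) ∈ C) ∧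
  ∀ (n m : ℕ) (f : (Fin (n + 1) → A) → A) (g : Fin (n + 1) → (Fin (m + 1) → A) → A),
    (⟨n, f⟩ : Ops A) ∈ C → (∀ i, (⟨m, g i⟩ : Ops A) ∈ C) →
    (⟨m, fun x => f fun i => g i x⟩ : Ops A) ∈ C

/-- The clone generated by a set `F` of operations: the least clone containing `F`. -/
def cloneGen {A : Type u} (F : Set (Ops A)) : Set (Ops A) :=
  ⋂₀ {C : Set (Ops A) | IsClone C ∧ F ⊆ C}

/-- The clone of all projection operations on `A`. -/
def projClone (A : Type u) : Set (Ops A) :=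
  {f : Ops A | ∃ i : Fin (f.1 + 1), f.2 = fun x => x i}

/-- A clone `M` is maximal if it is a proper subclone of the clone of all operations
and the clone of all operations is the only clone properly containing it. -/
def IsMaximalClone {A : Type u} (M : Set (Ops A)) : Prop :=
  IsClone M ∧ M ≠ Set.univ ∧
    ∀ D : Set (Ops A), IsClone D → M ⊆ D → D = M ∨ D = Set.univ

/-- A clone `C` is minimal if the clone of projections is its unique proper subclone. -/
def IsMinimalClone {A : Type u} (C : Set (Ops A)) : Prop :=
  IsClone C ∧ C ≠ projClone A ∧
    ∀ D : Set (Ops A), IsClone D → D ⊆ C → D = projClone A ∨ D = C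

/-- An `n`-ary operation `f` preserves a `k`-ary relation `ρ` if applying `f`
coordinatewise to tuples from `ρ` always yields a tuple in `ρ`. -/
def Preserves {A : Type u} {n k : ℕ} (f : (Fin n → A) → A) (ρ : Set (Fin k → A)) : Prop :=
  ∀ t : Fin n → Fin k → A, (∀ i, t i ∈ ρ) → (fun j => f fun i => t i j) ∈ ρ

/-- `Pol ρ` is the clone of all operations preserving the relation `ρ`. -/
def Pol {A : Type u} {k : ℕ} (ρ : Set (Fin k → A)) : Set (Ops A) :=
  {f : Ops A | Preserves f.2 ρ}

set_option linter.unusedSectionVars false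
set_option linter.unusedVariables false


section Aux
variable {A : Type u} {M : Set (Ops A)} (hC : IsClone M)

theorem mem_congr {m : ℕ} {f1 f2 : (Fin (m+1) → A) → A}
    (h : (⟨m, f1⟩ : Ops A) ∈ M) (he : ∀ x, f1 x = f2 x) : (⟨m, f2⟩ : Ops A) ∈ M := by
  obtain rfl : f1 = f2 := funext he
  exact h

include hC in
theorem mem_unary_proj (θ : A → A) (hθ : (⟨0, fun x => θ (x 0)⟩ : Ops A) ∈ M)
    (m : ℕ) (j : Fin (m+1)) : (⟨m, fun x => θ (x j)⟩ : Ops A) ∈ M :=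
  hC.2 0 m (fun x => θ (x 0)) (fun _ => fun x => x j) hθ (fun _ => hC.1 m j)

include hC in
theorem mem_post_unary (θ : A → A) (hθ : (⟨0, fun x => θ (x 0)⟩ : Ops A) ∈ M)
    {m : ℕ} {h : (Fin (m+1) → A) → A} (hh : (⟨m, h⟩ : Ops A) ∈ M) :
    (⟨m, fun x => θ (h x)⟩ : Ops A) ∈ M :=
  hC.2 0 m (fun x => θ (x 0)) (fun _ => h) hθ (fun _ => hh)

theorem pol_isClone {k : ℕ} (ρ : Set (Fin k → A)) : IsClone (Pol ρ) := by
  constructor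
  · intro n i t ht
    exact ht i
  · intro n m f g hf hg t ht
    exact hf _ (fun i => hg i t ht)

include hC in
theorem sub_pol (nb mm : ℕ) (base : (Fin (nb+1) → A) → Fin (mm+1)) :
    M ⊆ Pol {v : Fin (mm+1) → A | (⟨nb, fun x => v (base x)⟩ : Ops A) ∈ M} := by
  rintro ⟨mh, h⟩ hh tt htt
  exact hC.2 mh nb h (fun i => fun x => tt i (base x)) hh (fun i => htt i)

end Aux

section Monster
variable {A : Type u} {M : Set (Ops A)} {N n : ℕ}

/-- auxiliary binary operations built from `g` and the matrix `t` -/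
def vB (e : Fin N ≃ A) (g : (Fin (n+1) → A) → A) (t : Fin (n+1) → Fin N → A)
    (c : Fin (n+1) → ℕ) (jc : Fin N) : A → A → A :=
  fun u w => g fun i => t i (if c i = 0 then e.symm u else if c i = 1 then e.symm w else jc)

def Phi (g : (Fin (n+1) → A) → A) (t : Fin (n+1) → Fin N → A)
    (X : Fin (n+1) → Bool) (j j' : Fin N) : A :=
  g fun i => t i (if X i then j else j')

def bF (g : (Fin (n+1) → A) → A) (t : Fin (n+1) → Fin N → A) (j : Fin N) : A :=
  g fun i => t i j

def IsBad {A : Type u} (M : Set (Ops A)) : Prop :=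
  ∀ v : A → A → A, (⟨1, fun y => v (y 0) (y 1)⟩ : Ops A) ∈ M →
    ∀ a0 a1 b0 b1 : A, a0 ≠ a1 → b0 ≠ b1 →
      (v a1 b1 = v a0 b1 ∨ v a1 b1 = v a1 b0 ∨ v a1 b1 = v a0 b0)

theorem phi_diag (g : (Fin (n+1) → A) → A) (t : Fin (n+1) → Fin N → A)
    (X : Fin (n+1) → Bool) (j : Fin N) : Phi g t X j j = bF g t j := by
  simp [Phi, bF]

theorem vB_apply (e : Fin N ≃ A) (g : (Fin (n+1) → A) → A) (t : Fin (n+1) → Fin N → A)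
    (c : Fin (n+1) → ℕ) (jc : Fin N) (u w : Fin N) :
    vB e g t c jc (e u) (e w) = g fun i => t i (if c i = 0 then u else if c i = 1 then w else jc) := by
  simp [vB]

theorem memB (hC : IsClone M) (hU : ∀ θ : A → A, (⟨0, fun x => θ (x 0)⟩ : Ops A) ∈ M)
    (e : Fin N ≃ A) {g : (Fin (n+1) → A) → A} (hg : (⟨n, g⟩ : Ops A) ∈ M)
    (t : Fin (n+1) → Fin N → A) (c : Fin (n+1) → ℕ) (jc : Fin N) :
    (⟨1, fun y => vB e g t c jc (y 0) (y 1)⟩ : Ops A) ∈ M := by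
  refine hC.2 n 1 g
    (fun i y => t i (if c i = 0 then e.symm (y 0) else if c i = 1 then e.symm (y 1) else jc)) hg ?_
  intro i
  by_cases h0 : c i = 0
  · exact mem_congr (mem_unary_proj hC (fun a => t i (e.symm a)) (hU (fun a => t i (e.symm a))) 1 0) (fun y => by simp [h0])
  · by_cases h1 : c i = 1
    · exact mem_congr (mem_unary_proj hC (fun a => t i (e.symm a)) (hU (fun a => t i (e.symm a))) 1 1)
        (fun y => by simp [h0, h1])
    · exact mem_congr (mem_unary_proj hC (fun _ => t i jc) (hU (fun _ => t i jc)) 1 0) (fun y => by simp [h0, h1])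

variable (e : Fin N ≃ A) {g : (Fin (n+1) → A) → A} {t : Fin (n+1) → Fin N → A}

theorem lemA1 (hbinj : Function.Injective (bF g t)) (hBAD : IsBad M)
    (hmem : ∀ c jc, (⟨1, fun y => vB e g t c jc (y 0) (y 1)⟩ : Ops A) ∈ M)
    (X : Fin (n+1) → Bool) {j j' : Fin N} (hjj : j ≠ j') :
    (Phi g t X j j' = bF g t j ∧ Phi g t X j' j = bF g t j') ∨
    (Phi g t X j j' = bF g t j' ∧ Phi g t X j' j = bF g t j) := by
  classical
  set c : Fin (n+1) → ℕ := fun i => if X i then 0 else 1 with hc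
  have ev : ∀ u w : Fin N, vB e g t c j (e u) (e w) = Phi g t X u w := by
    intro u w
    rw [vB_apply]
    apply congrArg
    funext i
    by_cases hX : X i <;> simp [hc, hX, Phi]
  have hne : ∀ u w : Fin N, u ≠ w → e u ≠ e w := fun u w h he => h (e.injective he)
  have hbne : ∀ u w : Fin N, u ≠ w → bF g t u ≠ bF g t w := fun u w h he => h (hbinj he)
  have h1 := hBAD _ (hmem c j) (e j') (e j) (e j') (e j)
    (hne _ _ (Ne.symm hjj)) (hne _ _ (Ne.symm hjj))
  have h2 := hBAD _ (hmem c j) (e j) (e j') (e j) (e j') (hne _ _ hjj) (hne _ _ hjj)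
  rw [ev, ev, ev, ev] at h1
  rw [ev, ev, ev, ev] at h2
  rw [phi_diag, phi_diag] at h1
  rw [phi_diag, phi_diag] at h2
  rcases h1 with h1 | h1 | h1
  · rcases h2 with h2 | h2 | h2
    · exact Or.inr ⟨h2.symm, h1.symm⟩
    · exact absurd (h2.trans h1.symm) (hbne j' j (Ne.symm hjj))
    · exact absurd h2 (hbne j' j (Ne.symm hjj))
  · rcases h2 with h2 | h2 | h2
    · exact absurd (h1.trans h2.symm) (hbne j j' hjj)
    · exact Or.inl ⟨h1.symm, h2.symm⟩
    · exact absurd h2 (hbne j' j (Ne.symm hjj))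
  · exact absurd h1 (hbne j j' hjj)

theorem lemSym (hbinj : Function.Injective (bF g t)) (hBAD : IsBad M)
    (hmem : ∀ c jc, (⟨1, fun y => vB e g t c jc (y 0) (y 1)⟩ : Ops A) ∈ M)
    (X : Fin (n+1) → Bool) {j j' : Fin N} (hjj : j ≠ j')
    (h : Phi g t X j j' = bF g t j) : Phi g t X j' j = bF g t j' := by
  rcases lemA1 e hbinj hBAD hmem X hjj with ⟨_, h2⟩ | ⟨h1, _⟩
  · exact h2
  · exact absurd (h.symm.trans h1) (fun he => hjj (hbinj he))

theorem lemExt (hbinj : Function.Injective (bF g t)) (hBAD : IsBad M)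
    (hmem : ∀ c jc, (⟨1, fun y => vB e g t c jc (y 0) (y 1)⟩ : Ops A) ∈ M)
    (X : Fin (n+1) → Bool) {a c c' : Fin N} (hac : a ≠ c) (hac' : a ≠ c') (hcc' : c ≠ c')
    (h : Phi g t X a c = bF g t a) : Phi g t X a c' = bF g t a := by
  classical
  by_contra hno
  have hbne : ∀ u w : Fin N, u ≠ w → bF g t u ≠ bF g t w := fun u w hx he => hx (hbinj he)
  have h2 : Phi g t X a c' = bF g t c' :=
    ((lemA1 e hbinj hBAD hmem X hac').resolve_left (fun hl => hno hl.1)).1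
  set cn : Fin (n+1) → ℕ := fun i => if X i then 0 else 1 with hc
  have ev : ∀ u w : Fin N, vB e g t cn a (e u) (e w) = Phi g t X u w := by
    intro u w
    rw [vB_apply]
    apply congrArg
    funext i
    by_cases hX : X i <;> simp [hc, hX, Phi]
  have hne : ∀ u w : Fin N, u ≠ w → e u ≠ e w := fun u w hx he => hx (e.injective he)
  -- corner (e a, e c) in square rows {e a, e c} cols {e c, e c'}
  have h3 := hBAD _ (hmem cn a) (e c) (e a) (e c') (e c) (hne _ _ (Ne.symm hac)) (hne _ _ (Ne.symm hcc'))
  rw [ev, ev, ev, ev] at h3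
  rw [phi_diag, h, h2] at h3
  rcases h3 with h3 | h3 | h3
  · exact hbne a c hac h3
  · exact hbne a c' hac' h3
  · rcases lemA1 e hbinj hBAD hmem X hcc' with ⟨h4, _⟩ | ⟨h4, _⟩
    · exact hbne a c hac (h3.trans h4)
    · exact hbne a c' hac' (h3.trans h4)

theorem winTransfer (hbinj : Function.Injective (bF g t)) (hBAD : IsBad M)
    (hmem : ∀ c jc, (⟨1, fun y => vB e g t c jc (y 0) (y 1)⟩ : Ops A) ∈ M)
    (X : Fin (n+1) → Bool) {j j' l l' : Fin N} (hjj : j ≠ j') (hll : l ≠ l')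
    (h : Phi g t X j j' = bF g t j) : Phi g t X l l' = bF g t l := by
  classical
  by_cases hl : l = j
  · subst hl
    by_cases h2 : l' = j'
    · subst h2; exact h
    · exact lemExt e hbinj hBAD hmem X hjj hll (fun hh => h2 hh.symm) h
  · have hjl : j ≠ l := fun hh => hl hh.symm
    have hw1 : Phi g t X j l = bF g t j := by
      by_cases hlj' : l = j'
      · subst hlj'; exact h
      · exact lemExt e hbinj hBAD hmem X hjj hjl (fun hh => hlj' hh.symm) h
    have hw2 : Phi g t X l j = bF g t l := lemSym e hbinj hBAD hmem X hjl hw1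
    by_cases hl'j : l' = j
    · subst hl'j; exact hw2
    · exact lemExt e hbinj hBAD hmem X hl hll (fun hh => hl'j hh.symm) hw2

end Monster

section BadFalse
variable {A : Type u} {M : Set (Ops A)} {N n : ℕ}

theorem exists_third {N : ℕ} (h3 : 3 ≤ N) (a b : Fin N) : ∃ c : Fin N, c ≠ a ∧ c ≠ b := by
  classical
  have hcard : ({a, b} : Finset (Fin N)).card < (Finset.univ : Finset (Fin N)).card := by
    have h1 : ({a, b} : Finset (Fin N)).card ≤ 2 :=
      le_trans (Finset.card_insert_le _ _) (by simp)
    simpa using lt_of_le_of_lt h1 (show 2 < (Finset.univ : Finset (Fin N)).card by simp only [Finset.card_univ, Fintype.card_fin]; omega)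
  have : ((Finset.univ : Finset (Fin N)) \ {a, b}).Nonempty := by
    rw [← Finset.card_pos, Finset.card_sdiff_of_subset (Finset.subset_univ _)]
    omega
  obtain ⟨c, hc⟩ := this
  simp only [Finset.mem_sdiff, Finset.mem_insert, Finset.mem_singleton] at hc
  exact ⟨c, fun h => hc.2 (Or.inl h), fun h => hc.2 (Or.inr h)⟩

theorem badFalse (hC : IsClone M) (hU : ∀ θ : A → A, (⟨0, fun x => θ (x 0)⟩ : Ops A) ∈ M)
    (e : Fin N ≃ A) (hN3 : 3 ≤ N)
    {g : (Fin (n+1) → A) → A} (hg : (⟨n, g⟩ : Ops A) ∈ M)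
    (t : Fin (n+1) → Fin N → A) (hti : ∀ i, ¬ Function.Surjective (t i))
    (hbinj : Function.Injective (bF g t)) (hBAD : IsBad M) : False := by
  classical
  have hmem : ∀ c jc, (⟨1, fun y => vB e g t c jc (y 0) (y 1)⟩ : Ops A) ∈ M :=
    fun c jc => memB hC hU e hg t c jc
  set j0 : Fin N := ⟨0, by omega⟩ with hj0
  set j1 : Fin N := ⟨1, by omega⟩ with hj1
  set j2 : Fin N := ⟨2, by omega⟩ with hj2
  have h01 : j0 ≠ j1 := by intro h; simpa [hj0, hj1] using congrArg Fin.val h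
  have h02 : j0 ≠ j2 := by intro h; simpa [hj0, hj2] using congrArg Fin.val h
  have h12 : j1 ≠ j2 := by intro h; simpa [hj1, hj2] using congrArg Fin.val h
  have hbne : ∀ u w : Fin N, u ≠ w → bF g t u ≠ bF g t w := fun u w hx he => hx (hbinj he)
  -- "X wins"
  set Win : (Fin (n+1) → Bool) → Prop := fun X => Phi g t X j0 j1 = bF g t j0 with hWin
  have winT : ∀ X, Win X → ∀ l l' : Fin N, l ≠ l' → Phi g t X l l' = bF g t l :=
    fun X hX l l' hll => winTransfer e hbinj hBAD hmem X h01 hll hX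
  have loseT : ∀ X, ¬ Win X → ∀ l l' : Fin N, l ≠ l' → Phi g t X l l' = bF g t l' := by
    intro X hX l l' hll
    rcases lemA1 e hbinj hBAD hmem X hll with ⟨h1, _⟩ | ⟨h1, _⟩
    · exact absurd (winTransfer e hbinj hBAD hmem X hll h01 h1) hX
    · exact h1
  have hWinFull : Win (fun _ => true) := by
    show Phi g t _ j0 j1 = bF g t j0
    simp only [Phi, bF]
    apply congrArg; funext i; simp [Phi]
  -- flip
  have hFlipNot : ∀ X, Win X → ¬ Win (fun i => !(X i)) := by
    intro X hX hX'
    have h1 : Phi g t (fun i => !(X i)) j0 j1 = Phi g t X j1 j0 := by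
      simp only [Phi, bF]
      apply congrArg; funext i; by_cases hc : X i = true <;> simp [hc]
    have h2 : Phi g t X j1 j0 = bF g t j1 := winT X hX j1 j0 (Ne.symm h01)
    rw [hWin] at hX'
    rw [h1, h2] at hX'
    exact hbne j1 j0 (Ne.symm h01) hX'
  -- D1 : no two disjoint winners
  have hD1 : ∀ X Y : Fin (n+1) → Bool, (∀ i, ¬(X i = true ∧ Y i = true)) →
      Win X → Win Y → False := by
    intro X Y hdisj hWX hWY
    set cn : Fin (n+1) → ℕ := fun i => if X i then 0 else if Y i then 1 else 2 with hcn
    set v : A → A → A := vB e g t cn j2 with hv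
    have cA : v (e j0) (e j2) = bF g t j0 := by
      have : v (e j0) (e j2) = Phi g t X j0 j2 := by
        rw [hv, vB_apply]; simp only [Phi, bF]; apply congrArg; funext i
        by_cases hX : X i
        · simp [hcn, hX, Phi]
        · by_cases hY : Y i <;> simp [hcn, hX, hY, Phi]
      rw [this]; exact winT X hWX j0 j2 h02
    have cB : v (e j2) (e j1) = bF g t j1 := by
      have : v (e j2) (e j1) = Phi g t Y j1 j2 := by
        rw [hv, vB_apply]; simp only [Phi, bF]; apply congrArg; funext i
        by_cases hX : X i
        · have hY : ¬ Y i = true := fun hY => hdisj i ⟨hX, hY⟩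
          simp [hcn, hX, hY, Phi]
        · by_cases hY : Y i <;> simp [hcn, hX, hY, Phi]
      rw [this]; exact winT Y hWY j1 j2 h12
    have cD : v (e j2) (e j2) = bF g t j2 := by
      rw [hv, vB_apply]; simp only [Phi, bF]; apply congrArg; funext i
      by_cases hX : X i
      · simp [hcn, hX]
      · by_cases hY : Y i <;> simp [hcn, hX, hY]
    have hne : ∀ u w : Fin N, u ≠ w → e u ≠ e w := fun u w hx he => hx (e.injective he)
    -- corner (e j0, e j2): value bF j0
    have hA := hBAD v (hv ▸ hmem cn j2) (e j2) (e j0) (e j1) (e j2)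
      (hne _ _ (Ne.symm h02)) (hne _ _ h12)
    rw [cA, cD, cB] at hA
    have hV : v (e j0) (e j1) = bF g t j0 := by
      rcases hA with hA | hA | hA
      · exact absurd hA (hbne j0 j2 h02)
      · exact hA.symm
      · exact absurd hA (hbne j0 j1 h01)
    -- corner (e j2, e j1): value bF j1
    have hB := hBAD v (hv ▸ hmem cn j2) (e j0) (e j2) (e j2) (e j1)
      (hne _ _ h02) (hne _ _ (Ne.symm h12))
    rw [cB, cD, cA, hV] at hB
    rcases hB with hB | hB | hB
    · exact hbne j1 j0 (Ne.symm h01) hB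
    · exact hbne j1 j2 h12 hB
    · exact hbne j1 j0 (Ne.symm h01) hB
  -- D2 : no 3-partition with all parts losing
  have hD2 : ∀ X Y : Fin (n+1) → Bool, (∀ i, ¬(X i = true ∧ Y i = true)) →
      ¬ Win X → ¬ Win Y → ¬ Win (fun i => !(X i || Y i)) → False := by
    intro X Y hdisj hLX hLY hLZ
    set cn : Fin (n+1) → ℕ := fun i => if X i then 0 else if Y i then 2 else 1 with hcn
    set v : A → A → A := vB e g t cn j1 with hv
    have c00 : v (e j0) (e j0) = bF g t j0 := by
      have : v (e j0) (e j0) = Phi g t Y j1 j0 := by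
        rw [hv, vB_apply]; simp only [Phi, bF]; apply congrArg; funext i
        by_cases hX : X i
        · have hY : ¬ Y i = true := fun hY => hdisj i ⟨hX, hY⟩
          simp [hcn, hX, hY, Phi]
        · by_cases hY : Y i <;> simp [hcn, hX, hY, Phi]
      rw [this]; exact loseT Y hLY j1 j0 (Ne.symm h01)
    have c01 : v (e j0) (e j1) = bF g t j1 := by
      have : v (e j0) (e j1) = Phi g t X j0 j1 := by
        rw [hv, vB_apply]; simp only [Phi, bF]; apply congrArg; funext i
        by_cases hX : X i
        · simp [hcn, hX, Phi]
        · by_cases hY : Y i <;> simp [hcn, hX, hY, Phi]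
      rw [this]; exact loseT X hLX j0 j1 h01
    have c10 : v (e j1) (e j0) = bF g t j1 := by
      have : v (e j1) (e j0) = Phi g t (fun i => !(X i || Y i)) j0 j1 := by
        rw [hv, vB_apply]; simp only [Phi, bF]; apply congrArg; funext i
        by_cases hX : X i
        · simp [hcn, hX, Phi]
        · by_cases hY : Y i <;> simp [hcn, hX, hY, Phi]
      rw [this]; exact loseT _ hLZ j0 j1 h01
    have c11 : v (e j1) (e j1) = bF g t j1 := by
      rw [hv, vB_apply]; simp only [Phi, bF]; apply congrArg; funext i
      by_cases hX : X i
      · simp [hcn, hX]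
      · by_cases hY : Y i <;> simp [hcn, hX, hY]
    have hne : ∀ u w : Fin N, u ≠ w → e u ≠ e w := fun u w hx he => hx (e.injective he)
    have hB := hBAD v (hv ▸ hmem cn j1) (e j1) (e j0) (e j1) (e j0)
      (hne _ _ (Ne.symm h01)) (hne _ _ (Ne.symm h01))
    rw [c00, c10, c01, c11] at hB
    rcases hB with hB | hB | hB <;> exact hbne j0 j1 h01 hB
  -- endgame: find a minimal winner
  have hWdec : DecidablePred Win := fun X => Classical.dec _
  set Wset : Finset (Fin (n+1) → Bool) := Finset.univ.filter (fun X => Win X) with hWset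
  have hWne : Wset.Nonempty :=
    ⟨fun _ => true, by rw [hWset, Finset.mem_filter]; exact ⟨Finset.mem_univ _, hWinFull⟩⟩
  obtain ⟨X0, hX0mem, hX0min⟩ := Finset.exists_min_image Wset
    (fun X => (Finset.univ.filter (fun i => X i = true)).card) hWne
  have hWinX0 : Win X0 := by simpa [hWset] using hX0mem
  set supp : Finset (Fin (n+1)) := Finset.univ.filter (fun i => X0 i = true) with hsupp
  have hsne : supp.Nonempty := by
    by_contra hcon
    rw [Finset.not_nonempty_iff_eq_empty] at hcon
    have hX0false : ∀ i, ¬ (X0 i = true) := by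
      intro i hi
      have : i ∈ supp := by simp [hsupp, hi]
      simp [hcon] at this
    have : Phi g t X0 j0 j1 = bF g t j1 := by
      simp only [Phi, bF]
      apply congrArg; funext i; simp [Phi, hX0false i, bF]
    rw [hWin] at hWinX0
    rw [this] at hWinX0
    exact hbne j1 j0 (Ne.symm h01) hWinX0
  by_cases hcard1 : supp.card = 1
  · -- single column i0 wins: contradiction with non-surjectivity
    obtain ⟨i0, hi0⟩ := Finset.card_eq_one.mp hcard1
    have hX0i0 : X0 i0 = true := by
      have : i0 ∈ supp := by simp [hi0]
      simpa [hsupp] using this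
    have hX0other : ∀ i, i ≠ i0 → ¬ (X0 i = true) := by
      intro i hne hi
      have : i ∈ supp := by simp [hsupp, hi]
      rw [hi0] at this
      exact hne (Finset.mem_singleton.mp this)
    -- t i0 is not injective
    have hnotinj : ¬ Function.Injective (t i0) := by
      intro hinj
      apply hti i0
      intro a
      have hinj2 : Function.Injective (fun j => e.symm (t i0 j)) := by
        intro x y hxy
        exact hinj (by simpa using congrArg e hxy)
      have hsurj2 := Finite.injective_iff_surjective.mp hinj2
      obtain ⟨j, hj⟩ := hsurj2 (e.symm a)
      exact ⟨j, e.symm.injective hj⟩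
    have : ∃ u w : Fin N, u ≠ w ∧ t i0 u = t i0 w := by
      by_contra hcon
      push_neg at hcon
      exact hnotinj (fun u w huw => by_contra fun hne => (hcon u w hne) huw)
    obtain ⟨u, w, huw, htuw⟩ := this
    obtain ⟨j', hj'u, hj'w⟩ := exists_third hN3 u w
    have e1 : Phi g t X0 u j' = bF g t u := winT X0 hWinX0 u j' (Ne.symm hj'u)
    have e2 : Phi g t X0 w j' = bF g t w := winT X0 hWinX0 w j' (Ne.symm hj'w)
    have e3 : Phi g t X0 u j' = Phi g t X0 w j' := by
      simp only [Phi, bF]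
      apply congrArg; funext i
      by_cases hii : i = i0
      · subst hii; simp [Phi, hX0i0, htuw]
      · simp [Phi, hX0other i hii]
    rw [e1, e2] at e3
    exact hbne u w huw e3
  · -- at least two columns in supp: split and use D2
    have hge2 : 2 ≤ supp.card := by
      have := Finset.card_pos.mpr hsne
      omega
    obtain ⟨i1, hi1⟩ := hsne
    set X1 : Fin (n+1) → Bool := fun i => if i = i1 then true else false with hX1
    set X2 : Fin (n+1) → Bool := fun i => X0 i && !(X1 i) with hX2
    have hdisj : ∀ i, ¬(X1 i = true ∧ X2 i = true) := by
      intro i ⟨ha, hb⟩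
      rw [hX1] at ha
      rw [hX2, hX1] at hb
      by_cases hii : i = i1 <;> simp [hii] at ha hb
    have hX1supp : Finset.univ.filter (fun i => X1 i = true) = {i1} := by
      ext i; simp [hX1]
    have hX2supp : Finset.univ.filter (fun i => X2 i = true) = supp.erase i1 := by
      ext i
      by_cases hii : i = i1 <;> simp [hX2, hX1, hii, hsupp]
    have hLX1 : ¬ Win X1 := by
      intro hW
      have := hX0min X1 (by rw [hWset, Finset.mem_filter]; exact ⟨Finset.mem_univ _, hW⟩)
      rw [hX1supp] at this
      simp at this
      omega
    have hLX2 : ¬ Win X2 := by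
      intro hW
      have := hX0min X2 (by rw [hWset, Finset.mem_filter]; exact ⟨Finset.mem_univ _, hW⟩)
      rw [hX2supp, Finset.card_erase_of_mem hi1] at this
      omega
    have hunion : ∀ i, (X1 i || X2 i) = X0 i := by
      intro i
      by_cases hii : i = i1
      · have hX0i : X0 i1 = true := by simpa [hsupp] using hi1
        simp [hX1, hX2, hii, hX0i]
      · simp [hX1, hX2, hii]
    have hLZ : ¬ Win (fun i => !(X1 i || X2 i)) := by
      have : (fun i => !(X1 i || X2 i)) = (fun i => !(X0 i)) := by
        funext i; rw [hunion]
      rw [this]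
      exact hFlipNot X0 hWinX0
    exact hD2 X1 X2 hdisj hLX1 hLX2 hLZ

end BadFalse

/-- indicator function of a set, with classical decidability baked in -/
noncomputable def indFun {α : Type v} {A : Type u} (S : Set α) (p q : A) : α → A :=
  fun x => @dite _ (x ∈ S) (Classical.dec _) (fun _ => q) (fun _ => p)

theorem indFun_mem {α : Type v} {A : Type u} {S : Set α} {p q : A} {x : α} (hx : x ∈ S) :
    indFun S p q x = q := dif_pos hx

theorem indFun_not {α : Type v} {A : Type u} {S : Set α} {p q : A} {x : α} (hx : x ∉ S) :
    indFun S p q x = p := dif_neg hx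

section Indicators
variable {A : Type u} {M : Set (Ops A)}

theorem indicators [Finite A] (hC : IsClone M)
    (hU : ∀ θ : A → A, (⟨0, fun x => θ (x 0)⟩ : Ops A) ∈ M)
    (v : A → A → A) (hv : (⟨1, fun y => v (y 0) (y 1)⟩ : Ops A) ∈ M)
    {a0 a1 b0 b1 : A} (ha : a0 ≠ a1) (hb : b0 ≠ b1)
    (h1 : v a1 b1 ≠ v a0 b1) (h2 : v a1 b1 ≠ v a1 b0) (h3 : v a1 b1 ≠ v a0 b0) :
    ∀ (m : ℕ) (S : Set (Fin (m+1) → A)) (p q : A),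
      (⟨m, indFun S p q⟩ : Ops A) ∈ M := by
  classical
  have recolor : ∀ (m : ℕ) (S : Set (Fin (m+1) → A)) (c0 c1 : A), c0 ≠ c1 →
      (⟨m, indFun S c0 c1⟩ : Ops A) ∈ M →
      ∀ p q : A, (⟨m, indFun S p q⟩ : Ops A) ∈ M := by
    intro m S c0 c1 hc hmem p q
    have hpost := mem_post_unary hC (fun z => if z = c1 then q else p)
      (hU (fun z => if z = c1 then q else p)) hmem
    refine mem_congr hpost ?_
    intro x
    by_cases hx : x ∈ S <;> simp [indFun, hx, hc]
  have bincomp : ∀ (m : ℕ) (f1 f2 : (Fin (m+1) → A) → A),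
      (⟨m, f1⟩ : Ops A) ∈ M → (⟨m, f2⟩ : Ops A) ∈ M →
      (⟨m, fun x => v (f1 x) (f2 x)⟩ : Ops A) ∈ M := by
    intro m f1 f2 hf1 hf2
    have hcols : ∀ i : Fin (1+1), (⟨m, if (i : ℕ) = 0 then f1 else f2⟩ : Ops A) ∈ M := by
      intro i
      by_cases hi : (i : ℕ) = 0
      · rw [if_pos hi]; exact hf1
      · rw [if_neg hi]; exact hf2
    have := hC.2 1 m (fun y => v (y 0) (y 1)) (fun i => if (i : ℕ) = 0 then f1 else f2) hv hcols
    refine mem_congr this ?_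
    intro x
    norm_num
  have cyl : ∀ (m : ℕ) (j : Fin (m+1)) (aa : A), (⟨m, indFun {x | x j = aa} a0 a1⟩ : Ops A) ∈ M := by
    intro m j aa
    refine mem_congr (mem_unary_proj hC (fun z => if z = aa then a1 else a0)
      (hU (fun z => if z = aa then a1 else a0)) m j) ?_
    intro x
    by_cases hx : x j = aa <;> simp [indFun, hx]
  have hconst : ∀ (m : ℕ) (c : A), (⟨m, fun _ => c⟩ : Ops A) ∈ M :=
    fun m c => mem_unary_proj hC (fun _ => c) (hU (fun _ => c)) m 0
  have hcompl : ∀ (m : ℕ) (S : Set (Fin (m+1) → A)),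
      (⟨m, indFun S a0 a1⟩ : Ops A) ∈ M → (⟨m, indFun Sᶜ a0 a1⟩ : Ops A) ∈ M := by
    intro m S hS
    have hpost := mem_post_unary hC (fun z => if z = a1 then a0 else a1)
      (hU (fun z => if z = a1 then a0 else a1)) hS
    refine mem_congr hpost ?_
    intro x
    by_cases hx : x ∈ S <;> simp [indFun, hx, ha, Ne.symm ha]
  have hinter : ∀ (m : ℕ) (S T : Set (Fin (m+1) → A)),
      (⟨m, indFun S a0 a1⟩ : Ops A) ∈ M → (⟨m, indFun T a0 a1⟩ : Ops A) ∈ M →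
      (⟨m, indFun (S ∩ T) a0 a1⟩ : Ops A) ∈ M := by
    intro m S T hS hT
    have hTb : (⟨m, indFun T b0 b1⟩ : Ops A) ∈ M := recolor m T a0 a1 ha hT b0 b1
    have hcomb := bincomp m _ _ hS hTb
    have hpost := mem_post_unary hC (fun z => if z = v a1 b1 then a1 else a0)
      (hU (fun z => if z = v a1 b1 then a1 else a0)) hcomb
    refine mem_congr hpost ?_
    intro x
    by_cases hx : x ∈ S <;> by_cases hy : x ∈ T <;>
      simp [indFun, hx, hy, Ne.symm h1, Ne.symm h2, Ne.symm h3]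
  have hunion : ∀ (m : ℕ) (S T : Set (Fin (m+1) → A)),
      (⟨m, indFun S a0 a1⟩ : Ops A) ∈ M → (⟨m, indFun T a0 a1⟩ : Ops A) ∈ M →
      (⟨m, indFun (S ∪ T) a0 a1⟩ : Ops A) ∈ M := by
    intro m S T hS hT
    have := hcompl m _ (hinter m _ _ (hcompl m S hS) (hcompl m T hT))
    have heq : (Sᶜ ∩ Tᶜ)ᶜ = S ∪ T := by
      ext x
      simp only [Set.mem_compl_iff, Set.mem_inter_iff, Set.mem_union, not_and_or, not_not]
    rwa [heq] at this
  have hsingle : ∀ (m : ℕ) (y0 : Fin (m+1) → A),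
      (⟨m, indFun ({y0} : Set _) a0 a1⟩ : Ops A) ∈ M := by
    intro m y0
    have key : ∀ s : Finset (Fin (m+1)),
        (⟨m, indFun {x | ∀ j ∈ s, x j = y0 j} a0 a1⟩ : Ops A) ∈ M := by
      intro s
      induction s using Finset.induction_on with
      | empty =>
        refine mem_congr (hconst m a1) ?_
        intro x
        simp [indFun]
      | @insert a s hnot ih =>
        have := hinter m _ _ (cyl m a (y0 a)) ih
        refine mem_congr this ?_
        intro x
        have hiff : x ∈ ({z : Fin (m+1) → A | z a = y0 a} ∩ {z | ∀ j ∈ s, z j = y0 j}) ↔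
            x ∈ {z : Fin (m+1) → A | ∀ j ∈ insert a s, z j = y0 j} := by
          simp only [Set.mem_inter_iff, Set.mem_setOf_eq, Finset.mem_insert]
          constructor
          · rintro ⟨hxa, hrest⟩ j hj
            rcases hj with rfl | hj
            · exact hxa
            · exact hrest j hj
          · intro hall
            exact ⟨hall a (Or.inl rfl), fun j hj => hall j (Or.inr hj)⟩
        by_cases hx : x ∈ {z : Fin (m+1) → A | ∀ j ∈ insert a s, z j = y0 j}
        · rw [indFun_mem (S := {z : Fin (m+1) → A | z a = y0 a} ∩ {z | ∀ j ∈ s, z j = y0 j})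
            (hiff.mpr hx), indFun_mem hx]
        · rw [indFun_not (S := {z : Fin (m+1) → A | z a = y0 a} ∩ {z | ∀ j ∈ s, z j = y0 j})
            (fun hc => hx (hiff.mp hc)), indFun_not hx]
    have := key Finset.univ
    refine mem_congr this ?_
    intro x
    have hiff : x ∈ {z : Fin (m+1) → A | ∀ j ∈ Finset.univ, z j = y0 j} ↔
        x ∈ ({y0} : Set _) := by
      simp only [Set.mem_setOf_eq, Set.mem_singleton_iff]
      constructor
      · intro h; funext j; exact h j (Finset.mem_univ j)
      · intro h j _; rw [h]
    by_cases hx : x ∈ ({y0} : Set _)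
    · rw [indFun_mem (S := {z : Fin (m+1) → A | ∀ j ∈ Finset.univ, z j = y0 j})
        (hiff.mpr hx), indFun_mem hx]
    · rw [indFun_not (S := {z : Fin (m+1) → A | ∀ j ∈ Finset.univ, z j = y0 j})
        (fun hc => hx (hiff.mp hc)), indFun_not hx]
  have allsets : ∀ (m : ℕ) (S : Set (Fin (m+1) → A)),
      (⟨m, indFun S a0 a1⟩ : Ops A) ∈ M := by
    intro m S
    refine Set.Finite.induction_on (motive := fun S _ => (⟨m, indFun S a0 a1⟩ : Ops A) ∈ M)
      S S.toFinite ?_ ?_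
    · refine mem_congr (hconst m a0) ?_
      intro x
      simp [indFun]
    · intro a s _hnot _hfin ih
      have := hunion m {a} s (hsingle m a) ih
      rwa [← Set.insert_eq] at this
  intro m S p q
  exact recolor m S a0 a1 ha (allsets m S) p q

theorem monster [Finite A] (hC : IsClone M)
    (hU : ∀ θ : A → A, (⟨0, fun x => θ (x 0)⟩ : Ops A) ∈ M)
    {N n : ℕ} (e : Fin N ≃ A) (hN3 : 3 ≤ N)
    {g : (Fin (n+1) → A) → A} (hg : (⟨n, g⟩ : Ops A) ∈ M)
    (t : Fin (n+1) → Fin N → A) (hti : ∀ i, ¬ Function.Surjective (t i))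
    (hbinj : Function.Injective (bF g t)) :
    ∀ (m : ℕ) (S : Set (Fin (m+1) → A)) (p q : A),
      (⟨m, indFun S p q⟩ : Ops A) ∈ M := by
  classical
  by_cases hBAD : IsBad M
  · exact (badFalse hC hU e hN3 hg t hti hbinj hBAD).elim
  · unfold IsBad at hBAD
    push_neg at hBAD
    obtain ⟨v, hv, a0, a1, b0, b1, ha, hb, h1, h2, h3⟩ := hBAD
    exact indicators hC hU v hv ha hb h1 h2 h3

end Indicators

theorem sigma_not_univ {A : Type u} {N : ℕ} (e : Fin (N+1) ≃ A) (hN : 3 ≤ N + 1) :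
    ∃ q : Ops A, q ∉ Pol {v : Fin (N+1) → A | ¬ Function.Surjective v} := by
  classical
  obtain ⟨y0, hy0⟩ : ∃ z : Fin (N+1), z = ⟨0, by omega⟩ := ⟨_, rfl⟩
  obtain ⟨y1, hy1⟩ : ∃ z : Fin (N+1), z = ⟨1, by omega⟩ := ⟨_, rfl⟩
  obtain ⟨y2, hy2⟩ : ∃ z : Fin (N+1), z = ⟨2, by omega⟩ := ⟨_, rfl⟩
  have hy01 : y0 ≠ y1 := by rw [hy0, hy1]; intro h; simpa using congrArg Fin.val h
  have hy02 : y0 ≠ y2 := by rw [hy0, hy2]; intro h; simpa using congrArg Fin.val h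
  have hy12 : y1 ≠ y2 := by rw [hy1, hy2]; intro h; simpa using congrArg Fin.val h
  refine ⟨⟨1, fun x => if x 0 = e y1 then e y0 else x 1⟩, ?_⟩
  intro hPol
  have hcols : ∀ i : Fin (1+1),
      (if (i : ℕ) = 0 then (fun j => if j = y0 then e y1 else e y0)
       else (fun j : Fin (N+1) => if j = y0 then e y1 else e j)) ∈
      {v : Fin (N+1) → A | ¬ Function.Surjective v} := by
    intro i
    by_cases hi : (i : ℕ) = 0
    · rw [if_pos hi]
      intro hsurj
      obtain ⟨j, hj⟩ := hsurj (e y2)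
      simp only at hj
      by_cases hjy : j = y0
      · rw [if_pos hjy] at hj
        exact hy12 (e.injective hj)
      · rw [if_neg hjy] at hj
        exact hy02 (e.injective hj)
    · rw [if_neg hi]
      intro hsurj
      obtain ⟨j, hj⟩ := hsurj (e y0)
      simp only at hj
      by_cases hjy : j = y0
      · rw [if_pos hjy] at hj
        exact hy01 (e.injective hj.symm)
      · rw [if_neg hjy] at hj
        exact hjy (e.injective hj)
  have hout := hPol _ hcols
  apply hout
  intro a
  obtain ⟨j, hj⟩ := e.surjective a
  refine ⟨j, ?_⟩
  show (if (if ((0 : Fin (1+1)) : ℕ) = 0 then (fun j => if j = y0 then e y1 else e y0)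
       else (fun j : Fin (N+1) => if j = y0 then e y1 else e j)) j = e y1 then e y0
       else (if ((1 : Fin (1+1)) : ℕ) = 0 then (fun j => if j = y0 then e y1 else e y0)
       else (fun j : Fin (N+1) => if j = y0 then e y1 else e j)) j) = a
  norm_num
  by_cases hjy : j = y0
  · subst hjy
    simpa using hj
  · rw [if_neg (show ¬(¬j = y0 → y0 = y1) from fun himp => hy01 (himp hjy))]
    rw [if_neg hjy]
    exact hj


/-- Every maximal clone on a finite set `A` with `|A| ≥ 3` is of the form `Pol ρ`
for some relation `ρ` on `A` of arity at most `|A|`. -/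
theorem maximal_clone_is_Pol {A : Type u} [Fintype A] (hA : 3 ≤ Fintype.card A) :
    ∀ M : Set (Ops A), IsMaximalClone M →
      ∃ (m : ℕ) (ρ : Set (Fin (m + 1) → A)), m + 1 ≤ Fintype.card A ∧ M = Pol ρ := by

  classical
  intro M hMax
  obtain ⟨hClone, hNeUniv, hMaxP⟩ := hMax
  set k := Fintype.card A with hk
  set m0 := k - 1 with hm0
  have hm0k : m0 + 1 = k := by omega
  have e : Fin (m0+1) ≃ A := (Fintype.equivFinOfCardEq (by omega)).symm
  have conclude : ∀ (m : ℕ) (ρ : Set (Fin (m+1) → A)), M ⊆ Pol ρ → Pol ρ ≠ Set.univ →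
      m + 1 ≤ k →
      ∃ (m' : ℕ) (ρ' : Set (Fin (m' + 1) → A)), m' + 1 ≤ k ∧ M = Pol ρ' := by
    intro m ρ hsub hne hle
    rcases hMaxP (Pol ρ) (pol_isClone ρ) hsub with h | h
    · exact ⟨m, ρ, hle, h.symm⟩
    · exact absurd h hne
  by_cases hU : ∀ θ : A → A, (⟨0, fun x => θ (x 0)⟩ : Ops A) ∈ M
  · -- Case 2 : all unary operations belong to M
    have hexq : ∃ q : Ops A, q ∉ M := by
      by_contra hcon; push_neg at hcon
      exact hNeUniv (Set.eq_univ_of_forall hcon)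
    set Svals : Set ℕ := {c | ∃ q : Ops A, q ∉ M ∧ (Set.range q.2).ncard = c} with hSvals
    have hSne : Svals.Nonempty := by
      obtain ⟨q, hq⟩ := hexq; exact ⟨_, q, hq, rfl⟩
    set r := sInf Svals with hr
    have hrmem : r ∈ Svals := Nat.sInf_mem hSne
    obtain ⟨⟨nf, f⟩, hfop, hfr⟩ := hrmem
    have hfr2 : (Set.range f).ncard = r := hfr
    have hmin : ∀ q : Ops A, q ∉ M → r ≤ (Set.range q.2).ncard :=
      fun q hq => Nat.sInf_le ⟨q, hq, rfl⟩
    have hconstM : ∀ (mm : ℕ) (c : A), (⟨mm, fun _ => c⟩ : Ops A) ∈ M :=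
      fun mm c => mem_unary_proj hClone (fun _ => c) (hU (fun _ => c)) mm 0
    have hAne : Nonempty A := Fintype.card_pos_iff.mp (by omega)
    have hr2 : 2 ≤ r := by
      by_contra hcon
      push_neg at hcon
      have hrange_ne : (Set.range f).Nonempty := Set.range_nonempty f
      have hpos : 0 < (Set.range f).ncard := (Set.ncard_pos (Set.toFinite _)).mpr hrange_ne
      have h1 : (Set.range f).ncard = 1 := by omega
      obtain ⟨c, hc⟩ := Set.ncard_eq_one.mp h1
      have hfc : ∀ x, f x = c := by
        intro x
        have : f x ∈ Set.range f := Set.mem_range_self x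
        rw [hc] at this
        exact this
      exact hfop (mem_congr (hconstM nf c) (fun x => (hfc x).symm))
    have hrk : r ≤ k := by
      have h1 : (Set.range f).ncard ≤ (Set.univ : Set A).ncard :=
        Set.ncard_le_ncard (Set.subset_univ _) Set.finite_univ
      rw [Set.ncard_univ, Nat.card_eq_fintype_card] at h1
      omega
    by_cases hr3 : 3 ≤ r
    · -- Case 2a : minimal non-member has at least 3 values
      set m1 := r - 1 with hm1
      obtain ⟨z0, hz0⟩ : ∃ z : Fin (m1+1), z = ⟨0, by omega⟩ := ⟨_, rfl⟩
      obtain ⟨z1, hz1⟩ : ∃ z : Fin (m1+1), z = ⟨1, by omega⟩ := ⟨_, rfl⟩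
      have hz01 : z0 ≠ z1 := by
        rw [hz0, hz1]; intro h; simpa using congrArg Fin.val h
      have hfincard : Fintype.card (Set.range f) = m1 + 1 := by
        rw [← Nat.card_eq_fintype_card, Nat.card_coe_set_eq, hfr]; omega
      set w : Fin (m1+1) ≃ Set.range f := (Fintype.equivFinOfCardEq hfincard).symm with hw
      set w' : Fin (m1+1) → A := fun c => (w c : A) with hw'
      have hw'inj : Function.Injective w' := fun c c' h => w.injective (Subtype.ext h)
      set cls : A → Fin (m1+1) := fun a => if h : a ∈ Set.range f then w.symm ⟨a, h⟩ else z0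
        with hclsdef
      have hcls : ∀ x, w' (cls (f x)) = f x := by
        intro x
        have h : f x ∈ Set.range f := Set.mem_range_self x
        simp [hclsdef, h, hw']
      set ρ : Set (Fin (m1+1) → A) := {v | (⟨nf, fun x => v (cls (f x))⟩ : Ops A) ∈ M} with hρ
      have hsub : M ⊆ Pol ρ := sub_pol hClone nf m1 (fun x => cls (f x))
      set oth : Fin (m1+1) → Fin (m1+1) := fun c0 => if c0 = z0 then z1 else z0 with hothdef
      have hoth : ∀ c0, oth c0 ≠ c0 := by
        intro c0
        simp only [hothdef]
        by_cases h : c0 = z0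
        · rw [if_pos h, h]; exact Ne.symm hz01
        · rw [if_neg h]; exact fun hh => h hh.symm
      set mrg : Fin (m1+1) → Fin (m1+1) → Fin (m1+1) :=
        fun c0 c => if c = c0 then oth c0 else c with hmrgdef
      have hmrg_ne : ∀ c0 c, mrg c0 c ≠ c0 := by
        intro c0 c
        simp only [hmrgdef]
        by_cases h : c = c0
        · rw [if_pos h]; exact hoth c0
        · rw [if_neg h]; exact h
      have hmrg_id : ∀ c0 c, c ≠ c0 → mrg c0 c = c := by
        intro c0 c h; simp only [hmrgdef]; exact if_neg h
      have hcolmem : ∀ c0, (fun c => w' (mrg c0 c)) ∈ ρ := by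
        intro c0
        show (⟨nf, fun x => w' (mrg c0 (cls (f x)))⟩ : Ops A) ∈ M
        by_contra hq
        have hge := hmin ⟨nf, fun x => w' (mrg c0 (cls (f x)))⟩ hq
        have hsubset : Set.range (fun x => w' (mrg c0 (cls (f x)))) ⊆ w' '' {c | c ≠ c0} := by
          rintro _ ⟨x, rfl⟩
          exact ⟨mrg c0 (cls (f x)), hmrg_ne c0 _, rfl⟩
        have hb1 : (w' '' {c | c ≠ c0}).ncard ≤ ({c : Fin (m1+1) | c ≠ c0}).ncard :=
          Set.ncard_image_le (Set.toFinite _)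
        have hb2 : ({c : Fin (m1+1) | c ≠ c0}).ncard = m1 := by
          have heq : {c : Fin (m1+1) | c ≠ c0} = ↑(Finset.univ.erase c0) := by
            ext c; simp
          rw [heq, Set.ncard_coe_finset, Finset.card_erase_of_mem (Finset.mem_univ _)]
          simp
        have hb0 : (Set.range fun x => w' (mrg c0 (cls (f x)))).ncard ≤
            (w' '' {c | c ≠ c0}).ncard := Set.ncard_le_ncard hsubset (Set.toFinite _)
        simp only at hge hb0
        omega
      have hw'notin : w' ∉ ρ := by
        intro hmem
        exact hfop (mem_congr hmem (fun x => hcls x))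
      have hrowinj : ∀ c c' : Fin (m1+1), (∀ c0, w' (mrg c0 c) = w' (mrg c0 c')) → c = c' := by
        intro c c' hall
        by_contra hcc
        obtain ⟨c0, hc0c, hc0c'⟩ := exists_third (by omega) c c'
        have h := hall c0
        rw [hmrg_id c0 c (Ne.symm hc0c), hmrg_id c0 c' (Ne.symm hc0c')] at h
        exact hcc (hw'inj h)
      set F : (Fin (m1+1) → A) → A :=
        fun y => if h : ∃ c, ∀ c0, y c0 = w' (mrg c0 c) then w' h.choose else w' z0 with hFdef
      have hFval : ∀ c, F (fun c0 => w' (mrg c0 c)) = w' c := by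
        intro c
        have hex : ∃ c', ∀ c0, (fun c0 => w' (mrg c0 c)) c0 = w' (mrg c0 c') :=
          ⟨c, fun c0 => rfl⟩
        simp only [hFdef, dif_pos hex]
        have := hrowinj c hex.choose (fun c0 => hex.choose_spec c0)
        rw [← this]
      have hFviol : (⟨m1, F⟩ : Ops A) ∉ Pol ρ := by
        intro hPol
        have hout := hPol (fun c0 => fun c => w' (mrg c0 c)) (fun c0 => hcolmem c0)
        rw [show (fun c => F (fun c0 => w' (mrg c0 c))) = w' from funext hFval] at hout
        exact hw'notin hout
      exact conclude m1 ρ hsub (fun h => hFviol (h ▸ Set.mem_univ _)) (by omega)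
    · -- Case 2b : there is a two-valued operation outside M
      have hre : r = 2 := by omega
      set σ : Set (Fin (m0+1) → A) := {v | ¬ Function.Surjective v} with hσ
      have hsubσ : M ⊆ Pol σ := by
        by_contra hnsub
        rw [Set.not_subset] at hnsub
        obtain ⟨⟨ng, g⟩, hgM, hgP⟩ := hnsub
        have hgP' : ¬ Preserves g σ := hgP
        unfold Preserves at hgP'
        push_neg at hgP'
        obtain ⟨t, hti, hout⟩ := hgP'
        have hsurj : Function.Surjective (fun j => g fun i => t i j) := by
          by_contra hcon
          exact hout hcon
        have hbinj : Function.Injective (bF g t) := by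
          have hcards : Fintype.card (Fin (m0+1)) = Fintype.card A := by
            rw [Fintype.card_fin]; omega
          exact ((Fintype.bijective_iff_surjective_and_card _).mpr ⟨hsurj, hcards⟩).1
        have hind := monster hClone hU e (by omega) hgM t (fun i => hti i) hbinj
        have h2 : (Set.range f).ncard = 2 := by omega
        obtain ⟨α, β, hαβ, hrange⟩ := Set.ncard_eq_two.mp h2
        have hfind := hind nf {x | f x = β} α β
        have hfM : (⟨nf, f⟩ : Ops A) ∈ M := by
          refine mem_congr hfind ?_
          intro x
          by_cases hx : f x = β
          · rw [indFun_mem (S := {z | f z = β}) hx, hx]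
          · have hmem : f x ∈ Set.range f := Set.mem_range_self x
            rw [hrange] at hmem
            rcases hmem with hα | hβ
            · rw [indFun_not (S := {z | f z = β}) hx, hα]
            · exact absurd hβ hx
        exact hfop hfM
      obtain ⟨q, hq⟩ := sigma_not_univ e (by omega)
      exact conclude m0 σ hsubσ (fun h => hq (h ▸ Set.mem_univ _)) (by omega)
  · -- Case 1 : some unary operation is missing from M
    push_neg at hU
    obtain ⟨θ, hθ⟩ := hU
    set ρ : Set (Fin (m0+1) → A) := {v | (⟨0, fun x => v (e.symm (x 0))⟩ : Ops A) ∈ M} with hρ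
    have hsub : M ⊆ Pol ρ := sub_pol hClone 0 m0 (fun x => e.symm (x 0))
    have hviol : (⟨0, fun x => θ (x 0)⟩ : Ops A) ∉ Pol ρ := by
      intro hPol
      have hcol : (fun j : Fin (m0+1) => e j) ∈ ρ := by
        show (⟨0, fun x => e (e.symm (x 0))⟩ : Ops A) ∈ M
        exact mem_congr (hClone.1 0 0) (fun x => (e.apply_symm_apply (x 0)).symm)
      have hout := hPol (fun _ => fun j => e j) (fun _ => hcol)
      have hout' : (⟨0, fun x => θ (e (e.symm (x 0)))⟩ : Ops A) ∈ M := hout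
      exact hθ (mem_congr hout' (fun x => by rw [e.apply_symm_apply]))
    exact conclude m0 ρ hsub (fun h => hviol (h ▸ Set.mem_univ _)) (by omega)
end

section
/- Maurer–Rhodes Theorem. Every finite simple group G is either abelian or functionally complete; that is, if G is a finite simple group that is not abelian, then the set consisting of the group multiplication, the inversion operation, and all constant unary operations on G generates the clone O_G of all finitary operations on G. -/
universe u

set_option linter.unusedSectionVars false

section MR

variable {G : Type u} [Group G]

def genSet (G : Type u) [Group G] : Set (Ops G) :=
  ({⟨1, fun x : Fin 2 → G => x 0 * x 1⟩,
      ⟨0, fun x : Fin 1 → G => (x 0)⁻¹⟩} : Set (Ops G)) ∪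
    {f : Ops G | ∃ c : G, f = ⟨0, fun _ : Fin 1 → G => c⟩}

lemma isClone_cloneGen (F : Set (Ops G)) : IsClone (cloneGen F) := by
  constructor
  · intro n i
    exact Set.mem_sInter.mpr fun C hC => hC.1.1 n i
  · intro n m f g hf hg
    exact Set.mem_sInter.mpr fun C hC =>
      hC.1.2 n m f g (Set.mem_sInter.mp hf C hC) fun i => Set.mem_sInter.mp (hg i) C hC

lemma subset_cloneGen (F : Set (Ops G)) : F ⊆ cloneGen F :=
  fun _ hx => Set.mem_sInter.mpr fun _ hC => hC.2 hx

def InC (n : ℕ) (f : (Fin (n + 1) → G) → G) : Prop :=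
  (⟨n, f⟩ : Ops G) ∈ cloneGen (genSet G)

lemma inC_proj (n : ℕ) (i : Fin (n + 1)) : InC n (fun x : Fin (n+1) → G => x i) :=
  (isClone_cloneGen (genSet G)).1 n i

lemma inC_const (n : ℕ) (c : G) : InC n (fun _ : Fin (n+1) → G => c) := by
  have hc : (⟨0, fun _ : Fin 1 → G => c⟩ : Ops G) ∈ cloneGen (genSet G) :=
    subset_cloneGen _ (Or.inr ⟨c, rfl⟩)
  have := (isClone_cloneGen (genSet G)).2 0 n (fun _ => c)
    (fun _ => fun x => x 0) hc (fun _ => inC_proj n 0)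
  exact this

lemma inC_mul {n : ℕ} {p q : (Fin (n+1) → G) → G} (hp : InC n p) (hq : InC n q) :
    InC n (fun x => p x * q x) := by
  have hm : (⟨1, fun x : Fin 2 → G => x 0 * x 1⟩ : Ops G) ∈ cloneGen (genSet G) :=
    subset_cloneGen _ (Or.inl (Or.inl rfl))
  have h := (isClone_cloneGen (genSet G)).2 1 n (fun x : Fin 2 → G => x 0 * x 1)
    ![p, q] hm (by
      intro i
      fin_cases i
      · simpa [InC] using hp
      · simpa [InC] using hq)
  simpa [InC] using h

lemma inC_inv {n : ℕ} {p : (Fin (n+1) → G) → G} (hp : InC n p) :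
    InC n (fun x => (p x)⁻¹) := by
  have hi : (⟨0, fun x : Fin 1 → G => (x 0)⁻¹⟩ : Ops G) ∈ cloneGen (genSet G) :=
    subset_cloneGen _ (Or.inl (Or.inr rfl))
  have h := (isClone_cloneGen (genSet G)).2 0 n (fun x : Fin 1 → G => (x 0)⁻¹)
    (fun _ => p) hi (fun _ => hp)
  exact h

/-- unary functions realized by the clone -/
def U (w : G → G) : Prop := InC 0 (fun x : Fin 1 → G => w (x 0))

lemma u_comp {n : ℕ} {w : G → G} {f : (Fin (n+1) → G) → G} (hw : U w) (hf : InC n f) :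
    InC n (fun x => w (f x)) := by
  have h := (isClone_cloneGen (genSet G)).2 0 n (fun x : Fin 1 → G => w (x 0))
    (fun _ => f) hw (fun _ => hf)
  exact h

lemma u_id : U (fun y : G => y) := inC_proj 0 0
lemma u_const (c : G) : U (fun _ : G => c) := inC_const 0 c
lemma u_mul {w w' : G → G} (h : U w) (h' : U w') : U (fun y => w y * w' y) := inC_mul h h'
lemma u_inv {w : G → G} (h : U w) : U (fun y => (w y)⁻¹) := inC_inv h
lemma u_comp' {w w' : G → G} (h : U w) (h' : U w') : U (fun y => w (w' y)) := u_comp h h'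


lemma u_inC {w : G → G} (h : U w) : InC 0 (fun x : Fin 1 → G => w (x 0)) := h

lemma inC_precomp {n : ℕ} {f : (Fin (n+1) → G) → G} (hf : InC n f) :
    InC (n+1) (fun x : Fin (n+2) → G => f (fun i : Fin (n+1) => x i.succ)) :=
  (isClone_cloneGen (genSet G)).2 n (n+1) f (fun i => fun x => x i.succ) hf
    (fun i => inC_proj (n+1) i.succ)

/-- Lemma A: realize any target value at `a ≠ 1` by a clone-unary fixing 1. -/
lemma word_real (hG : IsSimpleGroup G) {a : G} (ha : a ≠ 1) (g : G) :
    ∃ w : G → G, U w ∧ w 1 = 1 ∧ w a = g := by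
  set Scar : Set G := {g | ∃ w : G → G, U w ∧ w 1 = 1 ∧ w a = g} with hS
  have hone : (1 : G) ∈ Scar := ⟨fun _ => 1, u_const 1, rfl, rfl⟩
  have hmul : ∀ x ∈ Scar, ∀ y ∈ Scar, x * y ∈ Scar := by
    rintro x ⟨w, hw, hw1, hwa⟩ y ⟨w', hw', hw'1, hw'a⟩
    exact ⟨fun z => w z * w' z, u_mul hw hw', by simp [hw1, hw'1], by simp [hwa, hw'a]⟩
  have hinv : ∀ x ∈ Scar, x⁻¹ ∈ Scar := by
    rintro x ⟨w, hw, hw1, hwa⟩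
    exact ⟨fun z => (w z)⁻¹, u_inv hw, by simp [hw1], by simp [hwa]⟩
  let S : Subgroup G :=
    { carrier := Scar
      one_mem' := hone
      mul_mem' := fun hx hy => hmul _ hx _ hy
      inv_mem' := fun hx => hinv _ hx }
  have hnormal : S.Normal := by
    constructor
    rintro x ⟨w, hw, hw1, hwa⟩ h
    refine ⟨fun z => h * w z * h⁻¹, ?_, by simp [hw1], by simp [hwa]⟩
    exact u_mul (u_mul (u_const h) hw) (u_const h⁻¹)
  have haS : a ∈ S := ⟨fun y => y, u_id, rfl, rfl⟩
  rcases hG.eq_bot_or_eq_top_of_normal S hnormal with h | h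
  · exact absurd (by simpa [h] using haS) ha
  · have : g ∈ S := by rw [h]; trivial
    exact this

/-- every nonidentity element fails to commute with something. -/
lemma exists_noncomm (hG : IsSimpleGroup G) (hna : ¬ ∀ a b : G, a * b = b * a)
    {u : G} (hu : u ≠ 1) : ∃ v : G, u * v ≠ v * u := by
  rcases hG.eq_bot_or_eq_top_of_normal (Subgroup.center G) (by
      constructor
      intro x hx g
      rw [Subgroup.mem_center_iff] at hx ⊢
      intro h
      have hgx : g * x * g⁻¹ = x := by rw [hx g]; group
      rw [hgx]
      exact hx h)
    with h | h
  · by_contra hv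
    push_neg at hv
    exact hu (by simpa [h] using (Subgroup.mem_center_iff.mpr fun g => (hv g).symm))
  · exact absurd (fun a b => by
      have : a ∈ Subgroup.center G := by rw [h]; trivial
      exact (Subgroup.mem_center_iff.mp this b).symm) hna

lemma exists_ne_one (hna : ¬ ∀ a b : G, a * b = b * a) : ∃ c : G, c ≠ (1:G) := by
  by_contra h
  push_neg at h
  exact hna fun a b => by rw [h a, h b]

lemma comm_ne_one {u v : G} (h : u * v ≠ v * u) : u * v * u⁻¹ * v⁻¹ ≠ 1 := by
  intro he
  apply h
  have : u * v * u⁻¹ = v := by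
    have := mul_eq_one_iff_eq_inv.mp he
    simpa [inv_inv] using this
  calc u * v = (u * v * u⁻¹) * u := by group
  _ = v * u := by rw [this]

/-- produce a pair u v with nonvanishing commutator, and words hitting them from
given nonidentity points c d, vanishing at 1. -/
lemma comm_words (hG : IsSimpleGroup G) (hna : ¬ ∀ a b : G, a * b = b * a)
    {c d : G} (hc : c ≠ 1) (hd : d ≠ 1) :
    ∃ p q : G → G, U p ∧ U q ∧ p 1 = 1 ∧ q 1 = 1 ∧ p c * q d * (p c)⁻¹ * (q d)⁻¹ ≠ 1 := by
  obtain ⟨u, hu⟩ := exists_ne_one hna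
  obtain ⟨v, huv⟩ := exists_noncomm hG hna hu
  obtain ⟨p, hp, hp1, hpc⟩ := word_real hG hc u
  obtain ⟨q, hq, hq1, hqd⟩ := word_real hG hd v
  exact ⟨p, q, hp, hq, hp1, hq1, by rw [hpc, hqd]; exact comm_ne_one huv⟩

/-- unary delta function -/
lemma delta1 (hG : IsSimpleGroup G) (hna : ¬ ∀ a b : G, a * b = b * a) [Fintype G] (a : G) :
    ∃ w : G → G, U w ∧ w a ≠ 1 ∧ ∀ b : G, b ≠ a → w b = 1 := by
  suffices h : ∀ S : Finset G, ∃ w : G → G, U w ∧ w a ≠ 1 ∧ ∀ b ∈ S, b ≠ a → w b = 1 by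
    obtain ⟨w, hw, hwa, hwb⟩ := h Finset.univ
    exact ⟨w, hw, hwa, fun b hb => hwb b (Finset.mem_univ b) hb⟩
  intro S
  classical
  induction S using Finset.induction_on with
  | empty =>
    obtain ⟨c, hc⟩ := exists_ne_one hna
    exact ⟨fun _ => c, u_const c, hc, fun b hb => absurd hb (Finset.notMem_empty b)⟩
  | @insert b S hbS ih =>
    obtain ⟨w, hw, hwa, hwS⟩ := ih
    by_cases hba : b = a
    · refine ⟨w, hw, hwa, fun x hx hxa => ?_⟩
      rcases Finset.mem_insert.mp hx with h | h
      · exact absurd (h.trans hba) hxa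
      · exact hwS x h hxa
    have hab : a * b⁻¹ ≠ 1 := by
      intro h; exact hba (by rw [mul_inv_eq_one] at h; exact h.symm)
    obtain ⟨p, q, hp, hq, hp1, hq1, hcomm⟩ := comm_words hG hna hwa hab
    refine ⟨fun x => p (w x) * q (x * b⁻¹) * (p (w x))⁻¹ * (q (x * b⁻¹))⁻¹, ?_, hcomm, ?_⟩
    · have hWX : U (fun x : G => p (w x)) := u_comp' hp hw
      have hQX : U (fun x : G => q (x * b⁻¹)) :=
        u_comp' hq (u_mul u_id (u_const b⁻¹))
      exact u_mul (u_mul (u_mul hWX hQX) (u_inv hWX)) (u_inv hQX)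
    · intro x hx hxa
      rcases Finset.mem_insert.mp hx with h | h
      · subst h
        simp [hq1]
      · simp [hwS x h hxa, hp1]

/-- n-ary delta function -/
lemma deltaN (hG : IsSimpleGroup G) (hna : ¬ ∀ a b : G, a * b = b * a) [Fintype G]
    (n : ℕ) (a : Fin (n+1) → G) :
    ∃ f : (Fin (n+1) → G) → G, InC n f ∧ f a ≠ 1 ∧ ∀ b, b ≠ a → f b = 1 := by
  induction n with
  | zero =>
    obtain ⟨w, hw, hwa, hwb⟩ := delta1 hG hna (a 0)
    refine ⟨fun x => w (x 0), u_inC hw, hwa, fun b hb => ?_⟩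
    refine hwb (b 0) fun h => hb ?_
    funext i
    have : i = 0 := Subsingleton.elim (α := Fin 1) i 0
    rw [this]; exact h
  | succ n ih =>
    obtain ⟨f, hf, hfa, hfb⟩ := ih (fun i => a i.succ)
    obtain ⟨w, hw, hwa, hwb⟩ := delta1 hG hna (a 0)
    obtain ⟨p, q, hp, hq, hp1, hq1, hcomm⟩ := comm_words hG hna hfa hwa
    refine ⟨fun x : Fin (n+2) → G => p (f (fun i : Fin (n+1) => x i.succ)) * q (w (x 0)) *
      (p (f (fun i : Fin (n+1) => x i.succ)))⁻¹ * (q (w (x 0)))⁻¹, ?_, hcomm, ?_⟩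
    · have hA : InC (n+1) (fun x : Fin (n+2) → G => p (f (fun i : Fin (n+1) => x i.succ))) :=
        u_comp hp (inC_precomp hf)
      have hB : InC (n+1) (fun x : Fin (n+2) → G => q (w (x 0))) :=
        u_comp hq (u_comp hw (inC_proj (n+1) 0))
      exact inC_mul (inC_mul (inC_mul hA hB) (inC_inv hA)) (inC_inv hB)
    · intro b hb
      by_cases h0 : b 0 = a 0
      · have hsucc : (fun i : Fin (n+1) => b i.succ) ≠ (fun i : Fin (n+1) => a i.succ) := by
          intro h
          apply hb
          funext i
          refine Fin.cases h0 (fun j => ?_) i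
          exact congrFun h j
        simp [hfb _ hsucc, hp1]
      · simp [hwb _ h0, hq1]

lemma inC_list_prod {n : ℕ} {ι : Type*} (g : ι → (Fin (n+1) → G) → G)
    (L : List ι) (hg : ∀ a ∈ L, InC n (g a)) :
    InC n (fun x => (L.map (fun a => g a x)).prod) := by
  induction L with
  | nil => simpa using inC_const n 1
  | cons a t ih =>
    simp only [List.map_cons, List.prod_cons]
    exact inC_mul (hg a (List.mem_cons_self)) (ih fun b hb => hg b (List.mem_cons_of_mem a hb))

lemma list_prod_eval {M : Type*} [Monoid M] {ι : Type*} (h : ι → M) (x : ι)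
    (h1 : ∀ a, a ≠ x → h a = 1)
    (L : List ι) (hL : L.Nodup) (hx : x ∈ L) :
    (L.map h).prod = h x := by
  have hone : ∀ (t : List ι), x ∉ t → ((t.map h).prod : M) = 1 := by
    intro t hxt
    apply List.prod_eq_one
    intro y hy
    simp only [List.mem_map] at hy
    obtain ⟨a, ha, rfl⟩ := hy
    exact h1 a (fun he => hxt (he ▸ ha))
  induction L with
  | nil => exact absurd hx List.not_mem_nil
  | cons a t ih =>
    simp only [List.map_cons, List.prod_cons]
    rcases List.mem_cons.mp hx with rfl | hxt
    · rw [hone t (List.nodup_cons.mp hL).1, mul_one]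
    · rw [h1 a (fun he => (List.nodup_cons.mp hL).1 (he ▸ hxt)), one_mul]
      exact ih (List.nodup_cons.mp hL).2 hxt

lemma inC_all [Fintype G] (hG : IsSimpleGroup G) (hna : ¬ ∀ a b : G, a * b = b * a)
    (n : ℕ) (f : (Fin (n+1) → G) → G) : InC n f := by
  classical
  -- for each tuple a, a clone function equal to f a at a and 1 elsewhere
  have key : ∀ a : Fin (n+1) → G, ∃ g : (Fin (n+1) → G) → G,
      InC n g ∧ g a = f a ∧ ∀ b, b ≠ a → g b = 1 := by
    intro a
    obtain ⟨d, hd, hda, hdb⟩ := deltaN hG hna n a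
    obtain ⟨w, hw, hw1, hwv⟩ := word_real hG hda (f a)
    exact ⟨fun x => w (d x), u_comp hw hd, hwv, fun b hb => by simp [hdb b hb, hw1]⟩
  choose g hgC hga hgb using key
  have hf : f = fun x => (((Finset.univ : Finset (Fin (n+1) → G)).toList.map
      (fun a => g a x)).prod : G) := by
    funext x
    rw [list_prod_eval (fun a => g a x) x (fun a ha => hgb a x (Ne.symm ha))
      _ (Finset.nodup_toList _) (Finset.mem_toList.mpr (Finset.mem_univ x)), hga x]
  rw [hf]
  exact inC_list_prod g _ (fun a _ => hgC a)

end MR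

/-- **Maurer–Rhodes Theorem.**  Every finite simple group `G` is either abelian or
functionally complete: if `G` is not abelian, then the group multiplication and
inversion together with all constant unary operations generate the clone of all
finitary operations on `G`. -/
theorem maurer_rhodes (G : Type u) [Group G] [Fintype G] (hG : IsSimpleGroup G) :
    (∀ a b : G, a * b = b * a) ∨
      cloneGen (({⟨1, fun x : Fin 2 → G => x 0 * x 1⟩,
            ⟨0, fun x : Fin 1 → G => (x 0)⁻¹⟩} : Set (Ops G)) ∪
          {f : Ops G | ∃ c : G, f = ⟨0, fun _ : Fin 1 → G => c⟩}) = Set.univ := by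
  by_cases h : ∀ a b : G, a * b = b * a
  · exact Or.inl h
  · right
    ext ⟨n, f⟩
    simp only [Set.mem_univ, iff_true]
    exact inC_all hG h n f
end
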